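/- Let D = D(𝔤) = 𝔤 ⊕ 𝔤* be the double of a finite-dimensional Lie bialgebra (𝔤, δ), with the symmetric bilinear form ⟨(x,ℓ),(y,m)⟩ = ℓ(y) + m(x). Then there is a unique Lie algebra structure on D such that: (i) 𝔤 and 𝔤* are Lie subalgebras (with 𝔤* carrying the bracket dual to δ, with opposite sign convention), and (ii) the bilinear form is invariant: ⟨[a,b],c⟩ + ⟨b,[a,c]⟩ = 0 for all a,b,c ∈ D. The mixed bracket is [x, ℓ] = ad*_x(ℓ) − ad*_ℓ(x) (coadjoint actions of 𝔤 on 𝔤* and of 𝔤* on 𝔤). -/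

import Mathlib

/- **Statement 16.**  `(𝔤, δ)` is a finite-dimensional Lie bialgebra over a
field `k`: the dual `𝔤*` carries the Lie bracket `bs` dual to the cocycle `δ`
(the cocycle property of `δ` is expressed through the standard compatibility
between `bs` and the coadjoint actions, hypothesis `hcocycle` below).
The double is `D = 𝔤 ⊕ 𝔤*` with the symmetric bilinear form
`⟨(x,ℓ),(y,m)⟩ = ℓ(y) + m(x)`. -/

/-- The coadjoint action of `x ∈ 𝔤` on `𝔤*`:  `(ad*_x ℓ)(y) = −ℓ([x,y])`. -/
noncomputable def adStarG (k : Type*) [Field k] {L : Type*} [LieRing L] [LieAlgebra k L]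
    (x : L) (ℓ : Module.Dual k L) : Module.Dual k L :=
  -(ℓ ∘ₗ (LieAlgebra.ad k L x))

/-- The coadjoint action of `ℓ ∈ 𝔤*` on `𝔤 = (𝔤*)*`:
`⟨m, ad*_ℓ x⟩ = −⟨[ℓ,m]_{𝔤*}, x⟩` (using reflexivity of `𝔤`). -/
noncomputable def adStarD (k : Type*) [Field k] {L : Type*} [LieRing L] [LieAlgebra k L]
    [FiniteDimensional k L]
    (bs : Module.Dual k L →ₗ[k] Module.Dual k L →ₗ[k] Module.Dual k L)
    (ℓ : Module.Dual k L) (x : L) : L :=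
  -(Module.evalEquiv k L).symm ((Module.Dual.eval k L x) ∘ₗ (bs ℓ))

/-- The canonical bilinear form on the double `D = 𝔤 ⊕ 𝔤*`:
`⟨(x,ℓ),(y,m)⟩ = ℓ(y) + m(x)`. -/
noncomputable def doubleForm (k : Type*) [Field k] {L : Type*} [LieRing L] [LieAlgebra k L]
    (p q : L × Module.Dual k L) : k :=
  p.2 q.1 + q.2 p.1

set_option linter.unusedSectionVars false

section Aux

variable (k : Type*) [Field k] {L : Type*} [LieRing L] [LieAlgebra k L] [FiniteDimensional k L]
  (bs : Module.Dual k L →ₗ[k] Module.Dual k L →ₗ[k] Module.Dual k L)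

lemma aG_apply (x : L) (ℓ : Module.Dual k L) (y : L) : adStarG k x ℓ y = -ℓ ⁅x, y⁆ := by
  simp [adStarG, LieAlgebra.ad_apply]

lemma dD_pair (ℓ m : Module.Dual k L) (x : L) : m (adStarD k bs ℓ x) = -(bs ℓ m) x := by
  have h := LinearEquiv.apply_symm_apply (Module.evalEquiv k L)
    ((Module.Dual.eval k L x) ∘ₗ (bs ℓ))
  have h2 : ∀ z : L, Module.evalEquiv k L z m = m z := fun z => rfl
  calc m (adStarD k bs ℓ x) = -(Module.evalEquiv k L ((Module.evalEquiv k L).symm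
        ((Module.Dual.eval k L x) ∘ₗ (bs ℓ))) m) := by
        simp [adStarD, ← h2]
    _ = -(bs ℓ m) x := by rw [h]; rfl

lemma ext_of_dual {x y : L} (h : ∀ m : Module.Dual k L, m x = m y) : x = y := by
  apply (Module.evalEquiv k L).injective
  ext m
  exact h m

-- linearity of adStarG
lemma aG_add_left (x y : L) (ℓ : Module.Dual k L) :
    adStarG k (x + y) ℓ = adStarG k x ℓ + adStarG k y ℓ := by
  ext z; simp [aG_apply]; ring
lemma aG_smul_left (c : k) (x : L) (ℓ : Module.Dual k L) :
    adStarG k (c • x) ℓ = c • adStarG k x ℓ := by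
  ext z; simp [aG_apply]
lemma aG_add_right (x : L) (ℓ m : Module.Dual k L) :
    adStarG k x (ℓ + m) = adStarG k x ℓ + adStarG k x m := by
  ext z; simp [aG_apply]; ring
lemma aG_smul_right (c : k) (x : L) (ℓ : Module.Dual k L) :
    adStarG k x (c • ℓ) = c • adStarG k x ℓ := by
  ext z; simp [aG_apply]
lemma aG_zero_right (x : L) : adStarG k x (0 : Module.Dual k L) = 0 := by
  ext z; simp [aG_apply]
lemma aG_zero_left (ℓ : Module.Dual k L) : adStarG k (0 : L) ℓ = 0 := by
  ext z; simp [aG_apply]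
lemma aG_neg_right (x : L) (ℓ : Module.Dual k L) : adStarG k x (-ℓ) = -adStarG k x ℓ := by
  ext z; simp [aG_apply]

-- linearity of adStarD
lemma dD_add_left (ℓ m : Module.Dual k L) (x : L) :
    adStarD k bs (ℓ + m) x = adStarD k bs ℓ x + adStarD k bs m x := by
  apply ext_of_dual k; intro p; simp [dD_pair]; ring
lemma dD_smul_left (c : k) (ℓ : Module.Dual k L) (x : L) :
    adStarD k bs (c • ℓ) x = c • adStarD k bs ℓ x := by
  apply ext_of_dual k; intro p; simp [dD_pair]
lemma dD_add_right (ℓ : Module.Dual k L) (x y : L) :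
    adStarD k bs ℓ (x + y) = adStarD k bs ℓ x + adStarD k bs ℓ y := by
  apply ext_of_dual k; intro p; simp [dD_pair]; ring
lemma dD_smul_right (c : k) (ℓ : Module.Dual k L) (x : L) :
    adStarD k bs ℓ (c • x) = c • adStarD k bs ℓ x := by
  apply ext_of_dual k; intro p; simp [dD_pair]
lemma dD_zero_left (x : L) : adStarD k bs (0 : Module.Dual k L) x = 0 := by
  apply ext_of_dual k; intro p; simp [dD_pair]
lemma dD_zero_right (ℓ : Module.Dual k L) : adStarD k bs ℓ (0 : L) = 0 := by
  apply ext_of_dual k; intro p; simp [dD_pair]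

lemma dD_neg_left (ℓ : Module.Dual k L) (x : L) :
    adStarD k bs (-ℓ) x = -adStarD k bs ℓ x := by
  apply ext_of_dual k; intro p; simp [dD_pair]

lemma dD_neg_right (ℓ : Module.Dual k L) (x : L) :
    adStarD k bs ℓ (-x) = -adStarD k bs ℓ x := by
  apply ext_of_dual k; intro p; simp [dD_pair]

lemma aG_neg_left (x : L) (ℓ : Module.Dual k L) : adStarG k (-x) ℓ = -adStarG k x ℓ := by
  ext z; simp [aG_apply]; rw [← lie_skew x z, map_neg]

/-- The candidate bracket on the double. -/
noncomputable def dbr : (L × Module.Dual k L) →ₗ[k] (L × Module.Dual k L) →ₗ[k]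
    (L × Module.Dual k L) :=
  LinearMap.mk₂ k
    (fun p q => (⁅p.1, q.1⁆ - adStarD k bs q.2 p.1 + adStarD k bs p.2 q.1,
                 bs p.2 q.2 + adStarG k p.1 q.2 - adStarG k q.1 p.2))
    (by intro p p' q
        ext
        · simp [dD_add_left, dD_add_right]; abel
        · simp [aG_add_left, aG_add_right]; abel)
    (by intro c p q
        ext
        · simp [dD_smul_left, dD_smul_right, smul_sub, smul_add]
        · simp [aG_smul_left, aG_smul_right, smul_sub, smul_add])
    (by intro p q q'
        ext
        · simp [dD_add_left, dD_add_right]; abel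
        · simp [aG_add_left, aG_add_right]; abel)
    (by intro c p q
        ext
        · simp [dD_smul_left, dD_smul_right, smul_sub, smul_add]
        · simp [aG_smul_left, aG_smul_right, smul_sub, smul_add])

lemma dbr_apply (p q : L × Module.Dual k L) :
    dbr k bs p q = (⁅p.1, q.1⁆ - adStarD k bs q.2 p.1 + adStarD k bs p.2 q.1,
                 bs p.2 q.2 + adStarG k p.1 q.2 - adStarG k q.1 p.2) := rfl

/-- coadjoint rep property of `adStarG`. -/
lemma aG_rep (x y : L) (ℓ : Module.Dual k L) :
    adStarG k x (adStarG k y ℓ) - adStarG k y (adStarG k x ℓ) = adStarG k ⁅x, y⁆ ℓ := by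
  ext z
  simp only [LinearMap.sub_apply, aG_apply, map_neg, neg_neg, leibniz_lie x y z, map_add]
  ring

/-- rep property of `adStarD` (from the Jacobi identity for `bs`). -/
lemma dD_rep (hanti : ∀ ℓ m, bs ℓ m = -bs m ℓ)
    (hjacobi : ∀ ℓ m p, bs ℓ (bs m p) + bs m (bs p ℓ) + bs p (bs ℓ m) = 0)
    (ℓ m : Module.Dual k L) (x : L) :
    adStarD k bs ℓ (adStarD k bs m x) - adStarD k bs m (adStarD k bs ℓ x)
      = adStarD k bs (bs ℓ m) x := by
  apply ext_of_dual k; intro p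
  simp only [map_sub, dD_pair, LinearMap.neg_apply, neg_neg]
  have h := hjacobi ℓ m p
  have h1 : bs ℓ p = -bs p ℓ := hanti ℓ p
  have h2 : bs m (bs ℓ p) = -bs m (bs p ℓ) := by rw [h1, map_neg]
  have := congrArg (fun q : Module.Dual k L => q x) h
  simp only [LinearMap.add_apply, LinearMap.zero_apply] at this
  have h2x := congrArg (fun q : Module.Dual k L => q x) h2
  simp only [LinearMap.neg_apply] at h2x
  have h3 := congrArg (fun q : Module.Dual k L => q x) (hanti (bs ℓ m) p)
  simp only [LinearMap.neg_apply] at h3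
  linear_combination h2x - this + h3

/-- auxiliary pairing identity. -/
lemma aux_pair (hanti : ∀ ℓ m, bs ℓ m = -bs m ℓ) (x y : L) (ℓ m : Module.Dual k L) :
    (adStarG k (adStarD k bs m x) ℓ) y = -(bs (adStarG k y ℓ) m) x := by
  have h1 : (adStarG k (adStarD k bs m x) ℓ) y = -ℓ ⁅adStarD k bs m x, y⁆ := aG_apply k _ _ _
  have h2 : ℓ ⁅adStarD k bs m x, y⁆ = -ℓ ⁅y, adStarD k bs m x⁆ := by
    rw [← lie_skew (adStarD k bs m x) y, map_neg]
  have h3 : ℓ ⁅y, adStarD k bs m x⁆ = -(adStarG k y ℓ) (adStarD k bs m x) := by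
    rw [aG_apply]; ring
  have h4 : (adStarG k y ℓ) (adStarD k bs m x) = -(bs m (adStarG k y ℓ)) x := dD_pair k bs _ _ _
  have h5 : bs m (adStarG k y ℓ) = -(bs (adStarG k y ℓ) m) := hanti m _
  rw [h1, h2, h3, h4, h5]
  simp

/-- the dual cocycle identity. -/
lemma dual_cocycle (hanti : ∀ ℓ m, bs ℓ m = -bs m ℓ)
    (hcocycle : ∀ (x : L) (ℓ m : Module.Dual k L),
      adStarG k x (bs ℓ m)
        = bs (adStarG k x ℓ) m + bs ℓ (adStarG k x m)
          + adStarG k (adStarD k bs m x) ℓ - adStarG k (adStarD k bs ℓ x) m)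
    (x y : L) (ℓ : Module.Dual k L) :
    adStarD k bs ℓ ⁅x, y⁆
      = ⁅adStarD k bs ℓ x, y⁆ + ⁅x, adStarD k bs ℓ y⁆
        + adStarD k bs (adStarG k y ℓ) x - adStarD k bs (adStarG k x ℓ) y := by
  apply ext_of_dual k; intro m
  -- LHS: m (d ℓ ⁅x,y⁆) = -(bs ℓ m)⁅x,y⁆ = (a x (bs ℓ m)) y
  have hL : m (adStarD k bs ℓ ⁅x, y⁆) = (adStarG k x (bs ℓ m)) y := by
    rw [dD_pair, aG_apply]
  -- RHS terms:
  have hr1 : m ⁅adStarD k bs ℓ x, y⁆ = -(adStarG k (adStarD k bs ℓ x) m) y := by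
    rw [aG_apply]; ring
  have hr2 : m ⁅x, adStarD k bs ℓ y⁆ = (bs ℓ (adStarG k x m)) y := by
    have : m ⁅x, adStarD k bs ℓ y⁆ = -(adStarG k x m) (adStarD k bs ℓ y) := by
      rw [aG_apply]; ring
    rw [this, dD_pair]; ring
  have hr3 : m (adStarD k bs (adStarG k y ℓ) x) = (adStarG k (adStarD k bs m x) ℓ) y := by
    rw [dD_pair, aux_pair k bs hanti]
  have hr4 : m (adStarD k bs (adStarG k x ℓ) y) = -(bs (adStarG k x ℓ) m) y := dD_pair k bs _ _ _
  rw [hL, map_sub, map_add, map_add, hr1, hr2, hr3, hr4, hcocycle x ℓ m]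
  simp only [LinearMap.add_apply, LinearMap.sub_apply]
  ring

lemma dbr_anti (hanti : ∀ ℓ m, bs ℓ m = -bs m ℓ) (p q : L × Module.Dual k L) :
    dbr k bs p q = -dbr k bs q p := by
  rw [dbr_apply, dbr_apply, Prod.neg_mk, Prod.mk.injEq]
  constructor
  · rw [← lie_skew]; abel
  · rw [hanti p.2 q.2]; abel

lemma dbr_GG (x y : L) : dbr k bs (x, 0) (y, 0) = (⁅x, y⁆, (0 : Module.Dual k L)) := by
  rw [dbr_apply, Prod.mk.injEq]
  constructor
  · simp [dD_zero_left]
  · simp [aG_zero_right]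

lemma dbr_DD (ℓ m : Module.Dual k L) : dbr k bs ((0 : L), ℓ) (0, m) = (0, bs ℓ m) := by
  rw [dbr_apply, Prod.mk.injEq]
  constructor
  · simp [dD_zero_right]
  · simp [aG_zero_left]

lemma dbr_GD (x : L) (ℓ : Module.Dual k L) :
    dbr k bs (x, 0) ((0 : L), ℓ) = (-adStarD k bs ℓ x, adStarG k x ℓ) := by
  rw [dbr_apply, Prod.mk.injEq]
  constructor
  · simp [dD_zero_left, dD_zero_right]
  · simp [aG_zero_right, aG_zero_left]


lemma dbr_invariant (hanti : ∀ ℓ m, bs ℓ m = -bs m ℓ) (p q r : L × Module.Dual k L) :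
    doubleForm k (dbr k bs p q) r + doubleForm k q (dbr k bs p r) = 0 := by
  obtain ⟨x, ℓ⟩ := p; obtain ⟨y, m⟩ := q; obtain ⟨z, n⟩ := r
  simp only [doubleForm, dbr_apply, map_sub, map_add, LinearMap.sub_apply, LinearMap.add_apply,
    aG_apply, dD_pair]
  have h1 : (bs m n) x = -(bs n m) x := by rw [hanti m n]; rfl
  have h2 : ℓ ⁅y, z⁆ = -ℓ ⁅z, y⁆ := by rw [← lie_skew z y, map_neg, neg_neg]
  linear_combination h1 + h2

noncomputable def Jf (p q r : L × Module.Dual k L) : L × Module.Dual k L :=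
  dbr k bs p (dbr k bs q r) + dbr k bs q (dbr k bs r p) + dbr k bs r (dbr k bs p q)

lemma Jf_cyc (p q r : L × Module.Dual k L) : Jf k bs p q r = Jf k bs q r p := by
  unfold Jf; abel

lemma Jf_add1 (p p' q r : L × Module.Dual k L) :
    Jf k bs (p + p') q r = Jf k bs p q r + Jf k bs p' q r := by
  unfold Jf
  simp only [map_add, LinearMap.add_apply]
  abel

lemma Jf_add2 (p q q' r : L × Module.Dual k L) :
    Jf k bs p (q + q') r = Jf k bs p q r + Jf k bs p q' r := by
  rw [Jf_cyc, Jf_add1, ← Jf_cyc k bs p q r, ← Jf_cyc k bs p q' r]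

lemma Jf_add3 (p q r r' : L × Module.Dual k L) :
    Jf k bs p q (r + r') = Jf k bs p q r + Jf k bs p q r' := by
  rw [Jf_cyc, Jf_add2, ← Jf_cyc k bs p q r, ← Jf_cyc k bs p q r']

lemma jac_GGG (x y z : L) : Jf k bs (x, 0) (y, 0) (z, 0) = 0 := by
  unfold Jf
  rw [dbr_GG, dbr_GG, dbr_GG, dbr_GG, dbr_GG, dbr_GG]
  rw [Prod.mk_add_mk, Prod.mk_add_mk]
  rw [Prod.mk_eq_zero]
  exact ⟨lie_jacobi x y z, by simp⟩

lemma jac_DDD (hjacobi : ∀ ℓ m p, bs ℓ (bs m p) + bs m (bs p ℓ) + bs p (bs ℓ m) = 0)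
    (ℓ m n : Module.Dual k L) : Jf k bs ((0 : L), ℓ) (0, m) (0, n) = 0 := by
  unfold Jf
  rw [dbr_DD, dbr_DD, dbr_DD, dbr_DD, dbr_DD, dbr_DD]
  rw [Prod.mk_add_mk, Prod.mk_add_mk]
  rw [Prod.mk_eq_zero]
  exact ⟨by simp, hjacobi ℓ m n⟩

lemma jac_GGD (hanti : ∀ ℓ m, bs ℓ m = -bs m ℓ)
    (hcocycle : ∀ (x : L) (ℓ m : Module.Dual k L),
      adStarG k x (bs ℓ m)
        = bs (adStarG k x ℓ) m + bs ℓ (adStarG k x m)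
          + adStarG k (adStarD k bs m x) ℓ - adStarG k (adStarD k bs ℓ x) m)
    (x y : L) (ℓ : Module.Dual k L) : Jf k bs (x, 0) (y, 0) ((0 : L), ℓ) = 0 := by
  unfold Jf
  rw [dbr_GD k bs y ℓ, dbr_GG k bs x y]
  have h1 : dbr k bs ((0 : L), ℓ) (x, 0) = (adStarD k bs ℓ x, -adStarG k x ℓ) := by
    rw [dbr_apply, Prod.mk.injEq]
    constructor
    · simp [dD_zero_left, dD_zero_right]
    · simp [aG_zero_right, aG_zero_left]
  rw [h1]
  rw [dbr_apply, dbr_apply, dbr_apply]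
  simp only [Prod.fst, Prod.snd, zero_lie, lie_zero, lie_neg, neg_lie, map_zero, map_neg,
    dD_zero_left, dD_zero_right, aG_zero_left, aG_zero_right, aG_neg_right, dD_neg_left, dD_neg_right, aG_neg_left,
    LinearMap.zero_apply, zero_add, add_zero, neg_zero, sub_zero, zero_sub, neg_neg]
  rw [Prod.mk_add_mk, Prod.mk_add_mk, Prod.mk_eq_zero]
  constructor
  · rw [dual_cocycle k bs hanti hcocycle x y ℓ,
      (lie_skew y (adStarD k bs ℓ x)).symm]
    module
  · rw [← aG_rep k x y ℓ]
    module

lemma jac_GDD (hanti : ∀ ℓ m, bs ℓ m = -bs m ℓ)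
    (hjacobi : ∀ ℓ m p, bs ℓ (bs m p) + bs m (bs p ℓ) + bs p (bs ℓ m) = 0)
    (hcocycle : ∀ (x : L) (ℓ m : Module.Dual k L),
      adStarG k x (bs ℓ m)
        = bs (adStarG k x ℓ) m + bs ℓ (adStarG k x m)
          + adStarG k (adStarD k bs m x) ℓ - adStarG k (adStarD k bs ℓ x) m)
    (x : L) (ℓ m : Module.Dual k L) : Jf k bs (x, 0) ((0 : L), ℓ) (0, m) = 0 := by
  unfold Jf
  rw [dbr_DD k bs ℓ m, dbr_GD k bs x ℓ, dbr_GD k bs x (bs ℓ m)]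
  have h2 : dbr k bs ((0 : L), m) (x, 0) = (adStarD k bs m x, -adStarG k x m) := by
    rw [dbr_apply, Prod.mk.injEq]
    constructor
    · simp [dD_zero_left, dD_zero_right]
    · simp [aG_zero_right, aG_zero_left]
  rw [h2]
  rw [dbr_apply, dbr_apply]
  simp only [Prod.fst, Prod.snd, zero_lie, lie_zero, lie_neg, neg_lie, map_zero, map_neg,
    dD_zero_left, dD_zero_right, aG_zero_left, aG_zero_right, aG_neg_right, dD_neg_left, dD_neg_right, aG_neg_left,
    LinearMap.zero_apply, LinearMap.neg_apply, zero_add, add_zero, neg_zero, sub_zero,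
    zero_sub, neg_neg]
  rw [Prod.mk_add_mk, Prod.mk_add_mk, Prod.mk_eq_zero]
  constructor
  · rw [← dD_rep k bs hanti hjacobi ℓ m x]
    abel
  · rw [hcocycle x ℓ m, hanti (adStarG k x ℓ) m]
    module

section jac
variable (hanti : ∀ ℓ m, bs ℓ m = -bs m ℓ)
  (hjacobi : ∀ ℓ m p, bs ℓ (bs m p) + bs m (bs p ℓ) + bs p (bs ℓ m) = 0)
  (hcocycle : ∀ (x : L) (ℓ m : Module.Dual k L),
      adStarG k x (bs ℓ m)
        = bs (adStarG k x ℓ) m + bs ℓ (adStarG k x m)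
          + adStarG k (adStarD k bs m x) ℓ - adStarG k (adStarD k bs ℓ x) m)
include hanti hjacobi hcocycle

lemma jac_GDG (x z : L) (m : Module.Dual k L) : Jf k bs (x, 0) ((0 : L), m) (z, 0) = 0 := by
  rw [Jf_cyc, Jf_cyc]; exact jac_GGD k bs hanti hcocycle z x m

lemma jac_DGG (ℓ : Module.Dual k L) (y z : L) : Jf k bs ((0 : L), ℓ) (y, 0) (z, 0) = 0 := by
  rw [Jf_cyc]; exact jac_GGD k bs hanti hcocycle y z ℓ

lemma jac_DGD (ℓ n : Module.Dual k L) (y : L) :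
    Jf k bs ((0 : L), ℓ) (y, 0) ((0 : L), n) = 0 := by
  rw [Jf_cyc]; exact jac_GDD k bs hanti hjacobi hcocycle y n ℓ

lemma jac_DDG (ℓ m : Module.Dual k L) (z : L) :
    Jf k bs ((0 : L), ℓ) ((0 : L), m) (z, 0) = 0 := by
  rw [Jf_cyc, Jf_cyc]; exact jac_GDD k bs hanti hjacobi hcocycle z ℓ m

lemma dbr_jacobi (p q r : L × Module.Dual k L) :
    dbr k bs p (dbr k bs q r) + dbr k bs q (dbr k bs r p) + dbr k bs r (dbr k bs p q) = 0 := by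
  show Jf k bs p q r = 0
  obtain ⟨x, ℓ⟩ := p; obtain ⟨y, m⟩ := q; obtain ⟨z, n⟩ := r
  have e1 : ((x, ℓ) : L × Module.Dual k L) = (x, 0) + (0, ℓ) := by simp
  have e2 : ((y, m) : L × Module.Dual k L) = (y, 0) + (0, m) := by simp
  have e3 : ((z, n) : L × Module.Dual k L) = (z, 0) + (0, n) := by simp
  rw [e1, e2, e3]
  simp only [Jf_add1, Jf_add2, Jf_add3]
  rw [jac_GGG, jac_GGD k bs hanti hcocycle, jac_GDG k bs hanti hjacobi hcocycle,
    jac_GDD k bs hanti hjacobi hcocycle, jac_DGG k bs hanti hjacobi hcocycle,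
    jac_DGD k bs hanti hjacobi hcocycle, jac_DDG k bs hanti hjacobi hcocycle,
    jac_DDD k bs hjacobi]
  simp

end jac

lemma forced_mixed (Br : (L × Module.Dual k L) →ₗ[k] (L × Module.Dual k L) →ₗ[k]
      (L × Module.Dual k L))
    (hBanti : ∀ p q, Br p q = -Br q p)
    (hBG : ∀ x y : L, Br (x, 0) (y, 0) = (⁅x, y⁆, (0 : Module.Dual k L)))
    (hBD : ∀ ℓ m : Module.Dual k L, Br (0, ℓ) (0, m) = ((0 : L), bs ℓ m))
    (hBinv : ∀ p q r, doubleForm k (Br p q) r + doubleForm k q (Br p r) = 0)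
    (x : L) (ℓ : Module.Dual k L) :
    Br (x, 0) ((0 : L), ℓ) = (-(adStarD k bs ℓ x), adStarG k x ℓ) := by
  rw [Prod.ext_iff]
  constructor
  · apply ext_of_dual k; intro m
    have h := hBinv ((0 : L), ℓ) (x, 0) ((0 : L), m)
    rw [hBanti ((0 : L), ℓ) (x, 0), hBD ℓ m] at h
    simp only [doubleForm, Prod.fst, Prod.snd, Prod.fst_neg, Prod.snd_neg, map_neg,
      LinearMap.neg_apply, map_zero, LinearMap.zero_apply, add_zero, zero_add] at h
    have h2 : m (-(adStarD k bs ℓ x)) = (bs ℓ m) x := by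
      rw [map_neg, dD_pair]; ring
    rw [h2]
    linear_combination -h
  · ext y
    have h := hBinv (x, 0) ((0 : L), ℓ) (y, 0)
    rw [hBG x y] at h
    simp only [doubleForm, Prod.fst, Prod.snd, map_zero, LinearMap.zero_apply,
      add_zero, zero_add] at h
    rw [aG_apply]
    linear_combination h

lemma eq_dbr (hanti : ∀ ℓ m, bs ℓ m = -bs m ℓ)
    (Br : (L × Module.Dual k L) →ₗ[k] (L × Module.Dual k L) →ₗ[k] (L × Module.Dual k L))
    (hBanti : ∀ p q, Br p q = -Br q p)
    (hBG : ∀ x y : L, Br (x, 0) (y, 0) = (⁅x, y⁆, (0 : Module.Dual k L)))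
    (hBD : ∀ ℓ m : Module.Dual k L, Br (0, ℓ) (0, m) = ((0 : L), bs ℓ m))
    (hBinv : ∀ p q r, doubleForm k (Br p q) r + doubleForm k q (Br p r) = 0) :
    Br = dbr k bs := by
  apply LinearMap.ext; intro p; apply LinearMap.ext; intro q
  obtain ⟨x, ℓ⟩ := p; obtain ⟨y, m⟩ := q
  have e1 : ((x, ℓ) : L × Module.Dual k L) = (x, 0) + (0, ℓ) := by simp
  have e2 : ((y, m) : L × Module.Dual k L) = (y, 0) + (0, m) := by simp
  rw [e1, e2]
  simp only [map_add, LinearMap.add_apply]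
  have hGD := forced_mixed k bs Br hBanti hBG hBD hBinv
  have hGDd : ∀ (x : L) (ℓ : Module.Dual k L),
      dbr k bs (x, 0) ((0 : L), ℓ) = (-(adStarD k bs ℓ x), adStarG k x ℓ) :=
    forced_mixed k bs (dbr k bs) (dbr_anti k bs hanti) (dbr_GG k bs) (dbr_DD k bs)
      (dbr_invariant k bs hanti)
  rw [hBG, dbr_GG k bs x y, hBD, dbr_DD k bs ℓ m, hGD x m, hGDd x m,
    hBanti ((0 : L), ℓ) (y, 0), hGD y ℓ, dbr_anti k bs hanti ((0 : L), ℓ) (y, 0), hGDd y ℓ]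


end Aux

/-- There is a unique Lie algebra structure on the double
`D(𝔤) = 𝔤 ⊕ 𝔤*` such that (i) `𝔤` and `𝔤*` are Lie subalgebras (with `𝔤*`
carrying the bracket dual to `δ`) and (ii) the canonical bilinear form is
invariant; moreover the mixed bracket is `[x,ℓ] = ad*_x(ℓ) − ad*_ℓ(x)`. -/
theorem double_lie_structure_exists_unique
    (k : Type*) [Field k] {L : Type*} [LieRing L] [LieAlgebra k L] [FiniteDimensional k L]
    (bs : Module.Dual k L →ₗ[k] Module.Dual k L →ₗ[k] Module.Dual k L)
    (hanti : ∀ ℓ m, bs ℓ m = -bs m ℓ)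
    (hjacobi : ∀ ℓ m p, bs ℓ (bs m p) + bs m (bs p ℓ) + bs p (bs ℓ m) = 0)
    -- the 1-cocycle (Lie bialgebra) compatibility between `⁅·,·⁆` and `bs`:
    (hcocycle : ∀ (x : L) (ℓ m : Module.Dual k L),
      adStarG k x (bs ℓ m)
        = bs (adStarG k x ℓ) m + bs ℓ (adStarG k x m)
          + adStarG k (adStarD k bs m x) ℓ - adStarG k (adStarD k bs ℓ x) m) :
    (∃! Br : (L × Module.Dual k L) →ₗ[k] (L × Module.Dual k L) →ₗ[k] (L × Module.Dual k L),
      (∀ p q, Br p q = -Br q p) ∧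
      (∀ p q r, Br p (Br q r) + Br q (Br r p) + Br r (Br p q) = 0) ∧
      (∀ x y : L, Br (x, 0) (y, 0) = (⁅x, y⁆, (0 : Module.Dual k L))) ∧
      (∀ ℓ m : Module.Dual k L, Br (0, ℓ) (0, m) = ((0 : L), bs ℓ m)) ∧
      (∀ p q r, doubleForm k (Br p q) r + doubleForm k q (Br p r) = 0)) ∧
    (∀ Br : (L × Module.Dual k L) →ₗ[k] (L × Module.Dual k L) →ₗ[k] (L × Module.Dual k L),
      ((∀ p q, Br p q = -Br q p) ∧
       (∀ p q r, Br p (Br q r) + Br q (Br r p) + Br r (Br p q) = 0) ∧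
       (∀ x y : L, Br (x, 0) (y, 0) = (⁅x, y⁆, (0 : Module.Dual k L))) ∧
       (∀ ℓ m : Module.Dual k L, Br (0, ℓ) (0, m) = ((0 : L), bs ℓ m)) ∧
       (∀ p q r, doubleForm k (Br p q) r + doubleForm k q (Br p r) = 0)) →
      ∀ (x : L) (ℓ : Module.Dual k L),
        Br (x, 0) (0, ℓ) = (-(adStarD k bs ℓ x), adStarG k x ℓ)) := by
  constructor
  · refine ⟨dbr k bs, ⟨dbr_anti k bs hanti, dbr_jacobi k bs hanti hjacobi hcocycle,
      dbr_GG k bs, dbr_DD k bs, dbr_invariant k bs hanti⟩, ?_⟩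
    intro Br ⟨hBanti, _, hBG, hBD, hBinv⟩
    exact eq_dbr k bs hanti Br hBanti hBG hBD hBinv
  · intro Br ⟨hBanti, _, hBG, hBD, hBinv⟩
    exact forced_mixed k bs Br hBanti hBG hBD hBinv
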